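/- In the GARCH(1,1) model, the time-consistent Value-at-Risk of the terminal loss satisfies the closed form ṼaR^α_t(L_T) = F_Z^{-1}(α) · sqrt(a₀ Σ_{k=0}^{T-t-2} (a₁ F_{Z²}^{-1}(α) + b)^k + σ_{t+1}² (a₁ F_{Z²}^{-1}(α) + b)^{T-t-1}) for t = 0,…,T−1. -/

import Mathlib

open MeasureTheory ProbabilityTheory Set

/-- The distribution function of a real random variable `Z` under `μ`. -/
noncomputable def distFun {Ω : Type*} [MeasurableSpace Ω] (μ : Measure Ω) (Z : Ω → ℝ) (x : ℝ) : ℝ :=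
  (μ (Z ⁻¹' Set.Iic x)).toReal

/-- Left-continuous quantile function (generalized inverse) of a distribution function. -/
noncomputable def quantileFun (F : ℝ → ℝ) (α : ℝ) : ℝ :=
  sInf {x : ℝ | α ≤ F x}

/-- The conditional Value-at-Risk at level `α` given the sub-σ-algebra `𝔉`, realized pointwise
via the regular conditional distribution: `VaR^α_t(L)(ω) = inf {m : P(L ≤ m | 𝔉)(ω) ≥ α}`. -/
noncomputable def condVaR {Ω : Type*} (𝔉 : MeasurableSpace Ω) [mΩ : MeasurableSpace Ω]
    [StandardBorelSpace Ω] [Nonempty Ω] (μ : Measure Ω) [IsFiniteMeasure μ]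
    (α : ℝ) (L : Ω → ℝ) (ω : Ω) : ℝ :=
  sInf {m : ℝ | α ≤ ((condExpKernel μ 𝔉 ω) (L ⁻¹' Set.Iic m)).toReal}

section AuxLemmas

open Filter Topology

lemma quantile_spec {F : ℝ → ℝ} {β y : ℝ} (h : ∀ x, β ≤ F x ↔ y ≤ x) :
    quantileFun F β = y := by
  have hs : {x : ℝ | β ≤ F x} = Set.Ici y := Set.ext h
  rw [quantileFun, hs, csInf_Ici]

lemma le_iff_forall_rat {a m : ℝ} : a ≤ m ↔ ∀ q : ℚ, m < (q : ℝ) → a ≤ (q : ℝ) := by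
  constructor
  · intro h q hq; exact h.trans hq.le
  · intro h; by_contra hlt
    push_neg at hlt
    obtain ⟨q, hq1, hq2⟩ := exists_rat_btwn hlt
    exact absurd (h q hq1) (not_le.mpr hq2)

lemma measure_setOf_le_eq_iInf {X : Type*} [MeasurableSpace X] (ρ : Measure X) [IsFiniteMeasure ρ]
    {h : X → ℝ} (hmeas : ∀ r : ℝ, MeasurableSet {x | h x ≤ r}) (m : ℝ) :
    ρ {x | h x ≤ m} = ⨅ q : {q : ℚ // m < (q : ℝ)}, ρ {x | h x ≤ (q.1 : ℝ)} := by
  have hset : {x | h x ≤ m} = ⋂ q : {q : ℚ // m < (q : ℝ)}, {x | h x ≤ (q.1 : ℝ)} := by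
    ext x
    simp only [mem_iInter, mem_setOf_eq, Subtype.forall]
    exact le_iff_forall_rat
  rw [hset]
  refine Directed.measure_iInter (fun q => (hmeas _).nullMeasurableSet) ?_ ?_
  · rintro i j
    refine ⟨⟨min i.1 j.1, by push_cast; exact lt_min i.2 j.2⟩, ?_, ?_⟩ <;>
      intro x hx <;> simp only [mem_setOf_eq] at hx ⊢ <;> refine le_trans hx ?_ <;> push_cast
    · exact min_le_left _ _
    · exact min_le_right _ _
  · obtain ⟨q, hq⟩ := exists_rat_gt m
    exact ⟨⟨q, hq⟩, measure_ne_top _ _⟩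

variable {Ω : Type*} [mΩ : MeasurableSpace Ω]

lemma distFun_map_eq {μ : Measure Ω} {Z : Ω → ℝ} (hZ : Measurable Z) (x : ℝ) :
    distFun μ Z x = ((μ.map Z) (Set.Iic x)).toReal := by
  rw [distFun, Measure.map_apply hZ measurableSet_Iic]

lemma exists_distFun_eq {μ : Measure Ω} [IsProbabilityMeasure μ] {Z : Ω → ℝ}
    (hZ : Measurable Z) (hcont : Continuous (distFun μ Z)) {β : ℝ}
    (hβ : β ∈ Set.Ioo (0:ℝ) 1) : ∃ y, distFun μ Z y = β := by
  have hmap : IsProbabilityMeasure (μ.map Z) := Measure.isProbabilityMeasure_map hZ.aemeasurable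
  have hFeq : distFun μ Z = fun x => cdf (μ.map Z) x := by
    funext x; rw [distFun_map_eq hZ, cdf_eq_real, measureReal_def]
  have h0 : Tendsto (distFun μ Z) atBot (𝓝 0) := by
    rw [hFeq]; exact tendsto_cdf_atBot (μ.map Z)
  have h1 : Tendsto (distFun μ Z) atTop (𝓝 1) := by
    rw [hFeq]; exact tendsto_cdf_atTop (μ.map Z)
  obtain ⟨a, ha⟩ := (h0.eventually_lt_const hβ.1).exists
  obtain ⟨b, hb⟩ := (h1.eventually_const_lt hβ.2).exists
  exact intermediate_value_univ a b hcont ⟨ha.le, hb.le⟩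

lemma setLIntegral_indep {Ω : Type*} (𝔉 : MeasurableSpace Ω) [mΩ : MeasurableSpace Ω]
    {μ : Measure Ω} [IsProbabilityMeasure μ] (h𝔉 : 𝔉 ≤ mΩ)
    {Z W : Ω → ℝ} (hZ : Measurable Z) (hW : Measurable[𝔉] W)
    (hind : Indep (MeasurableSpace.comap Z Real.measurableSpace) 𝔉 μ)
    {B : Set (ℝ × ℝ)} (hB : MeasurableSet B) {A : Set Ω} (hA : MeasurableSet[𝔉] A) :
    μ ({ω | (W ω, Z ω) ∈ B} ∩ A) = ∫⁻ ω in A, μ.map Z (Prod.mk (W ω) ⁻¹' B) ∂μ := by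
  haveI : IsProbabilityMeasure (μ.map Z) := Measure.isProbabilityMeasure_map hZ.aemeasurable
  have hWm : Measurable W := hW.mono h𝔉 le_rfl
  set V : Ω → ℝ × ℝ := fun ω => (W ω, A.indicator (fun _ => (1:ℝ)) ω) with hV
  have hV𝔉 : Measurable[𝔉] V := Measurable.prodMk hW (measurable_const.indicator hA)
  have hVm : Measurable V := hV𝔉.mono h𝔉 le_rfl
  haveI : IsProbabilityMeasure (μ.map V) := Measure.isProbabilityMeasure_map hVm.aemeasurable
  have hindf : IndepFun V Z μ := by
    rw [IndepFun_iff]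
    intro t1 t2 ht1 ht2
    rw [Indep_iff] at hind
    rw [Set.inter_comm, mul_comm]
    exact hind t2 t1 ht2 (measurable_iff_comap_le.mp hV𝔉 t1 ht1)
  have hmap : μ.map (fun ω => (V ω, Z ω)) = (μ.map V).prod (μ.map Z) :=
    (indepFun_iff_map_prod_eq_prod_map_map hVm.aemeasurable hZ.aemeasurable).mp hindf
  set C : Set ((ℝ × ℝ) × ℝ) := {p | (p.1.1, p.2) ∈ B ∧ p.1.2 = 1} with hC
  have hCm : MeasurableSet C :=
    ((measurable_fst.fst.prodMk measurable_snd) hB).inter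
      (measurable_fst.snd (measurableSet_singleton (1:ℝ)))
  have hpre : (fun ω => (V ω, Z ω)) ⁻¹' C = {ω | (W ω, Z ω) ∈ B} ∩ A := by
    ext ω
    have hi : A.indicator (fun _ => (1:ℝ)) ω = 1 ↔ ω ∈ A := by
      by_cases hω : ω ∈ A <;> simp [hω]
    simp only [hC, hV, Set.mem_preimage, Set.mem_setOf_eq, Set.mem_inter_iff]
    rw [hi]
  calc μ ({ω | (W ω, Z ω) ∈ B} ∩ A)
      = μ.map (fun ω => (V ω, Z ω)) C := by
        rw [Measure.map_apply (hVm.prodMk hZ) hCm, hpre]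
    _ = ((μ.map V).prod (μ.map Z)) C := by rw [hmap]
    _ = ∫⁻ v, μ.map Z (Prod.mk v ⁻¹' C) ∂(μ.map V) := Measure.prod_apply hCm
    _ = ∫⁻ ω, μ.map Z (Prod.mk (V ω) ⁻¹' C) ∂μ :=
        lintegral_map (measurable_measure_prodMk_left hCm) hVm
    _ = ∫⁻ ω in A, μ.map Z (Prod.mk (W ω) ⁻¹' B) ∂μ := by
        rw [← lintegral_indicator (h𝔉 _ hA)]
        congr 1
        funext ω
        by_cases hω : ω ∈ A
        · have : Prod.mk (V ω) ⁻¹' C = Prod.mk (W ω) ⁻¹' B := by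
            ext z; simp [hC, hV, hω]
          rw [this, Set.indicator_of_mem hω]
        · have : Prod.mk (V ω) ⁻¹' C = ∅ := by
            ext z; simp [hC, hV, hω]
          rw [this, Set.indicator_of_notMem hω, measure_empty]

lemma condexp_indep_pair {Ω : Type*} (𝔉 : MeasurableSpace Ω) [mΩ : MeasurableSpace Ω]
    {μ : Measure Ω} [IsProbabilityMeasure μ] (h𝔉 : 𝔉 ≤ mΩ)
    {Z W : Ω → ℝ} (hZ : Measurable Z) (hW : Measurable[𝔉] W)
    (hind : Indep (MeasurableSpace.comap Z Real.measurableSpace) 𝔉 μ)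
    {B : Set (ℝ × ℝ)} (hB : MeasurableSet B) :
    (fun ω => (μ.map Z (Prod.mk (W ω) ⁻¹' B)).toReal)
      =ᵐ[μ] μ⟦{ω | (W ω, Z ω) ∈ B} | 𝔉⟧ := by
  haveI : IsProbabilityMeasure (μ.map Z) := Measure.isProbabilityMeasure_map hZ.aemeasurable
  haveI : SigmaFinite (μ.trim h𝔉) := by
    haveI := isFiniteMeasure_trim (μ := μ) h𝔉
    infer_instance
  have hWm : Measurable W := hW.mono h𝔉 le_rfl
  have hEm : MeasurableSet {ω | (W ω, Z ω) ∈ B} := (hWm.prodMk hZ) hB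
  have hsl : Measurable fun w => μ.map Z (Prod.mk w ⁻¹' B) := measurable_measure_prodMk_left hB
  set g : Ω → ℝ := fun ω => (μ.map Z (Prod.mk (W ω) ⁻¹' B)).toReal with hg
  have hgm : Measurable g := (hsl.comp hWm).ennreal_toReal
  have hg𝔉 : Measurable[𝔉] g := (Measurable.comp hsl hW).ennreal_toReal
  have hgle : ∀ ω, g ω ≤ 1 := fun ω => by
    simpa using ENNReal.toReal_mono ENNReal.one_ne_top (prob_le_one)
  have hgint : Integrable g μ := by
    refine (integrable_const (1:ℝ)).mono' hgm.aestronglyMeasurable (ae_of_all _ fun ω => ?_)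
    rw [Real.norm_eq_abs, abs_of_nonneg ENNReal.toReal_nonneg]
    exact hgle ω
  refine ae_eq_condExp_of_forall_setIntegral_eq h𝔉
    ((integrable_const (1:ℝ)).indicator hEm) (fun s _ _ => hgint.integrableOn)
    (fun s hs hμs => ?_) ⟨g, hg𝔉.stronglyMeasurable, EventuallyEq.rfl⟩
  have hRHS : ∫ x in s, Set.indicator {ω | (W ω, Z ω) ∈ B} (fun _ => (1:ℝ)) x ∂μ
      = (μ ({ω | (W ω, Z ω) ∈ B} ∩ s)).toReal := by
    rw [integral_indicator hEm, setIntegral_const, measureReal_def, Measure.restrict_apply hEm,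
      smul_eq_mul, mul_one]
  rw [hRHS]
  have hLHS : ∫ x in s, g x ∂μ
      = (∫⁻ ω in s, μ.map Z (Prod.mk (W ω) ⁻¹' B) ∂μ).toReal := by
    rw [hg]
    refine integral_toReal ((hsl.comp hWm).aemeasurable) (ae_of_all _ fun ω => ?_)
    exact lt_of_le_of_lt prob_le_one ENNReal.one_lt_top
  rw [hLHS, ← setLIntegral_indep 𝔉 h𝔉 hZ hW hind hB hs]

lemma condVaR_comp {Ω : Type*} (𝔉 : MeasurableSpace Ω) [mΩ : MeasurableSpace Ω]
    [StandardBorelSpace Ω] [Nonempty Ω] {μ : Measure Ω} [IsProbabilityMeasure μ]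
    (h𝔉 : 𝔉 ≤ mΩ)
    {Z W : Ω → ℝ} (hZ : Measurable Z) (hW : Measurable[𝔉] W) (hWpos : ∀ ω, 0 < W ω)
    (hind : Indep (MeasurableSpace.comap Z Real.measurableSpace) 𝔉 μ)
    {G : ℝ → ℝ → ℝ} (hG : ∀ m : ℝ, MeasurableSet {p : ℝ × ℝ | G p.1 p.2 ≤ m})
    {f : Ω → ℝ} (hf : f =ᵐ[μ] fun ω => G (W ω) (Z ω))
    {α : ℝ} {r : ℝ → ℝ}
    (hiff : ∀ w, 0 < w → ∀ m : ℝ, (α ≤ (μ.map Z {x | G w x ≤ m}).toReal ↔ r w ≤ m)) :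
    condVaR 𝔉 μ α f =ᵐ[μ] fun ω => r (W ω) := by
  haveI : IsProbabilityMeasure (μ.map Z) := Measure.isProbabilityMeasure_map hZ.aemeasurable
  set ν := μ.map Z with hν
  have hWm : Measurable W := hW.mono h𝔉 le_rfl
  set N := toMeasurable μ {ω | f ω ≠ G (W ω) (Z ω)} with hNdef
  have hNm : MeasurableSet N := measurableSet_toMeasurable _ _
  have hNz : μ N = 0 := by
    rw [hNdef, measure_toMeasurable]
    exact ae_iff.mp hf
  have hsub : {ω | f ω ≠ G (W ω) (Z ω)} ⊆ N := subset_toMeasurable _ _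
  -- the kernel gives measure zero to N, a.e.
  have hkerN : ∀ᵐ ω ∂μ, condExpKernel μ 𝔉 ω N = 0 := by
    have h1 : (fun ω => (condExpKernel μ 𝔉 ω N).toReal) =ᵐ[μ] μ⟦N | 𝔉⟧ :=
      condExpKernel_ae_eq_condExp h𝔉 hNm
    have h2 : μ⟦N | 𝔉⟧ =ᵐ[μ] 0 := by
      have hind0 : (N.indicator (fun _ => (1:ℝ))) =ᵐ[μ] (0 : Ω → ℝ) := by
        filter_upwards [measure_eq_zero_iff_ae_notMem.mp hNz] with ω hω
        simp [Set.indicator_of_notMem hω]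
      calc μ⟦N | 𝔉⟧ =ᵐ[μ] μ[(0 : Ω → ℝ) | 𝔉] := condExp_congr_ae hind0
        _ = 0 := condExp_zero
    filter_upwards [h1, h2] with ω h1ω h2ω
    have h3 : (condExpKernel μ 𝔉 ω N).toReal = 0 := by
      rw [h1ω, h2ω]; rfl
    exact (ENNReal.toReal_eq_zero_iff _).mp h3 |>.resolve_right (measure_ne_top _ _)
  -- equality of kernel and ν on each level m, a.e.
  have hEq : ∀ m : ℝ, ∀ᵐ ω ∂μ,
      (condExpKernel μ 𝔉 ω {ω' | G (W ω') (Z ω') ≤ m}).toReal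
        = (ν {x | G (W ω) x ≤ m}).toReal := by
    intro m
    have hB : MeasurableSet {p : ℝ × ℝ | G p.1 p.2 ≤ m} := hG m
    have hEm : MeasurableSet {ω' | G (W ω') (Z ω') ≤ m} := (hWm.prodMk hZ) hB
    have h1 : (fun ω => (condExpKernel μ 𝔉 ω {ω' | G (W ω') (Z ω') ≤ m}).toReal)
        =ᵐ[μ] μ⟦{ω' | G (W ω') (Z ω') ≤ m} | 𝔉⟧ := condExpKernel_ae_eq_condExp (μ := μ) h𝔉 hEm
    have h2 := condexp_indep_pair 𝔉 h𝔉 hZ hW hind hB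
    have hsame : μ⟦{ω' | (W ω', Z ω') ∈ {p : ℝ × ℝ | G p.1 p.2 ≤ m}} | 𝔉⟧
        = μ⟦{ω' | G (W ω') (Z ω') ≤ m} | 𝔉⟧ := rfl
    rw [hsame] at h2
    filter_upwards [h1, h2] with ω h1ω h2ω
    rw [h1ω, ← h2ω]
    rfl
  have hallq : ∀ᵐ ω ∂μ, (∀ q : ℚ,
      (condExpKernel μ 𝔉 ω {ω' | G (W ω') (Z ω') ≤ (q:ℝ)}).toReal
        = (ν {x | G (W ω) x ≤ (q:ℝ)}).toReal) ∧ condExpKernel μ 𝔉 ω N = 0 :=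
    ((ae_all_iff).mpr fun q : ℚ => hEq (q : ℝ)).and hkerN
  filter_upwards [hallq] with ω hω
  obtain ⟨hq, hN0⟩ := hω
  haveI : IsProbabilityMeasure (condExpKernel μ 𝔉 ω) := inferInstance
  have hκE : ∀ m : ℝ, condExpKernel μ 𝔉 ω (f ⁻¹' Set.Iic m)
      = condExpKernel μ 𝔉 ω {ω' | G (W ω') (Z ω') ≤ m} := by
    intro m
    apply le_antisymm
    · calc condExpKernel μ 𝔉 ω (f ⁻¹' Set.Iic m)
          ≤ condExpKernel μ 𝔉 ω ({ω' | G (W ω') (Z ω') ≤ m} ∪ N) := by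
            refine measure_mono fun ω' hω' => ?_
            by_cases hne : f ω' = G (W ω') (Z ω')
            · exact Or.inl (by simpa [← hne] using hω')
            · exact Or.inr (hsub hne)
        _ ≤ condExpKernel μ 𝔉 ω {ω' | G (W ω') (Z ω') ≤ m} + condExpKernel μ 𝔉 ω N :=
            measure_union_le _ _
        _ = condExpKernel μ 𝔉 ω {ω' | G (W ω') (Z ω') ≤ m} := by rw [hN0, add_zero]
    · calc condExpKernel μ 𝔉 ω {ω' | G (W ω') (Z ω') ≤ m}
          ≤ condExpKernel μ 𝔉 ω ((f ⁻¹' Set.Iic m) ∪ N) := by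
            refine measure_mono fun ω' hω' => ?_
            by_cases hne : f ω' = G (W ω') (Z ω')
            · exact Or.inl (by simp only [Set.mem_preimage, Set.mem_Iic, hne]; exact hω')
            · exact Or.inr (hsub hne)
        _ ≤ condExpKernel μ 𝔉 ω (f ⁻¹' Set.Iic m) + condExpKernel μ 𝔉 ω N :=
            measure_union_le _ _
        _ = condExpKernel μ 𝔉 ω (f ⁻¹' Set.Iic m) := by rw [hN0, add_zero]
  have hκν : ∀ m : ℝ, condExpKernel μ 𝔉 ω {ω' | G (W ω') (Z ω') ≤ m}
      = ν {x | G (W ω) x ≤ m} := by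
    intro m
    have hmeasκ : ∀ rr : ℝ, MeasurableSet {ω' | G (W ω') (Z ω') ≤ rr} :=
      fun rr => (hWm.prodMk hZ) (hG rr)
    have hmeasν : ∀ rr : ℝ, MeasurableSet {x : ℝ | G (W ω) x ≤ rr} :=
      fun rr => (measurable_prodMk_left) (hG rr)
    rw [measure_setOf_le_eq_iInf (condExpKernel μ 𝔉 ω) hmeasκ m,
      measure_setOf_le_eq_iInf ν hmeasν m]
    refine iInf_congr fun qq => ?_
    exact (ENNReal.toReal_eq_toReal_iff' (measure_ne_top _ _) (measure_ne_top _ _)).mp (hq qq.1)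
  have hset : {m : ℝ | α ≤ ((condExpKernel μ 𝔉 ω) (f ⁻¹' Set.Iic m)).toReal}
      = Set.Ici (r (W ω)) := by
    ext m
    rw [Set.mem_setOf_eq, hκE m, hκν m, Set.mem_Ici]
    exact hiff (W ω) (hWpos ω) m
  show sInf {m : ℝ | α ≤ ((condExpKernel μ 𝔉 ω) (f ⁻¹' Set.Iic m)).toReal} = r (W ω)
  rw [hset, csInf_Ici]

lemma distFun_sq_neg {Ω : Type*} [mΩ : MeasurableSpace Ω] {μ : Measure Ω}
    {Z : Ω → ℝ} {x : ℝ} (hx : x < 0) : distFun μ (fun ω => Z ω ^ 2) x = 0 := by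
  have : (fun ω => Z ω ^ 2) ⁻¹' Set.Iic x = ∅ := by
    ext ω
    simp only [Set.mem_preimage, Set.mem_Iic, Set.mem_empty_iff_false, iff_false, not_le]
    exact lt_of_lt_of_le hx (sq_nonneg _)
  rw [distFun, this, measure_empty, ENNReal.toReal_zero]

lemma distFun_sq_eq {Ω : Type*} [mΩ : MeasurableSpace Ω] {μ : Measure Ω} [IsProbabilityMeasure μ]
    {Z : Ω → ℝ} (hZ : Measurable Z) (hsym : μ.map Z = μ.map (fun ω => -(Z ω)))
    {x : ℝ} (hx : 0 ≤ x) :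
    distFun μ (fun ω => Z ω ^ 2) x = 2 * distFun μ Z (Real.sqrt x) - 1 := by
  set s := Real.sqrt x with hs
  have hs0 : 0 ≤ s := Real.sqrt_nonneg x
  set A : Set Ω := Z ⁻¹' Set.Iic s with hA
  have hAm : MeasurableSet A := hZ measurableSet_Iic
  set B : Set Ω := Z ⁻¹' Set.Iio (-s) with hB
  have hBm : MeasurableSet B := hZ measurableSet_Iio
  have hBA : B ⊆ A := fun ω hω => by
    simp only [hB, Set.mem_preimage, Set.mem_Iio] at hω
    simp only [hA, Set.mem_preimage, Set.mem_Iic]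
    linarith
  have hset : (fun ω => Z ω ^ 2) ⁻¹' Set.Iic x = A \ B := by
    ext ω
    simp only [Set.mem_preimage, Set.mem_Iic, Set.mem_diff, hA, hB, Set.mem_preimage,
      Set.mem_Iic, Set.mem_Iio, not_lt]
    constructor
    · intro h
      have hsq : Z ω ^ 2 ≤ s ^ 2 := by rw [hs, Real.sq_sqrt hx]; exact h
      constructor <;> nlinarith
    · rintro ⟨h1, h2⟩
      have : Z ω ^ 2 ≤ s ^ 2 := by nlinarith
      rw [hs, Real.sq_sqrt hx] at this; exact this
  -- μ B = 1 - μ A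
  have hμB : μ B = 1 - μ A := by
    have hcompl : B = ((fun ω => -(Z ω)) ⁻¹' Set.Iic s)ᶜ := by
      ext ω
      simp only [hB, Set.mem_preimage, Set.mem_Iio, Set.mem_compl_iff, Set.mem_Iic, not_le]
      constructor <;> intro h <;> linarith
    have hmeq : μ ((fun ω => -(Z ω)) ⁻¹' Set.Iic s) = μ A := by
      rw [← Measure.map_apply (f := fun ω => -(Z ω)) hZ.neg measurableSet_Iic, ← hsym,
        Measure.map_apply hZ measurableSet_Iic]
    rw [hcompl, prob_compl_eq_one_sub ((show Measurable (fun ω => -(Z ω)) from hZ.neg) measurableSet_Iic), hmeq]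
  have hμAB : μ (A \ B) = μ A - μ B := measure_diff hBA hBm.nullMeasurableSet (measure_ne_top μ B)
  have hle : 1 - μ A ≤ μ A := by
    rw [← hμB]; exact measure_mono hBA
  rw [distFun, hset, hμAB, hμB, distFun]
  rw [ENNReal.toReal_sub_of_le hle (measure_ne_top μ A),
    ENNReal.toReal_sub_of_le prob_le_one ENNReal.one_ne_top]
  simp only [ENNReal.toReal_one]
  ring

end AuxLemmas

set_option maxHeartbeats 1000000 in
/-- Closed form for the time-consistent Value-at-Risk of the terminal GARCH(1,1) loss:
`ṼaR^α_t(L_T) = F_Z^{-1}(α) √(a₀ Σ_{k=0}^{T-t-2} (a₁ F_{Z²}^{-1}(α) + b)^k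
  + σ_{t+1}² (a₁ F_{Z²}^{-1}(α) + b)^{T-t-1})`. -/
theorem timeConsistent_VaR_closed_form {Ω : Type*} [mΩ : MeasurableSpace Ω]
    [StandardBorelSpace Ω] [Nonempty Ω] (μ : Measure Ω) [IsProbabilityMeasure μ]
    (ℱ : ℕ → MeasurableSpace Ω) (hℱ : ∀ t, ℱ t ≤ mΩ) (hmonoℱ : Monotone ℱ)
    (T : ℕ) (a₀ a₁ b : ℝ) (ha₀ : 0 < a₀) (ha₁ : 0 < a₁) (hb : 0 < b)
    (L σ Z : ℕ → Ω → ℝ)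
    -- GARCH(1,1) dynamics
    (hL : ∀ t, 1 ≤ t → t ≤ T → ∀ ω, L t ω = σ t ω * Z t ω)
    (hσrec : ∀ t, 1 ≤ t → t ≤ T → ∀ ω,
      σ t ω ^ 2 = a₀ + a₁ * L (t - 1) ω ^ 2 + b * σ (t - 1) ω ^ 2)
    (hσmeas : ∀ t, Measurable[ℱ t] (σ (t + 1))) (hσpos : ∀ t ω, 0 < σ t ω)
    (hZmeas : ∀ t, Measurable (Z t))
    -- innovations independent of the past
    (hindep : ∀ t, Indep (MeasurableSpace.comap (Z (t + 1)) Real.measurableSpace) (ℱ t) μ)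
    -- identically distributed, symmetric innovations with nice distribution function
    (hident : ∀ t, 1 ≤ t → t ≤ T → μ.map (Z t) = μ.map (Z 1))
    (hsym : μ.map (Z 1) = μ.map (fun ω => -(Z 1 ω)))
    (hmono : StrictMono (distFun μ (Z 1))) (hcont : Continuous (distFun μ (Z 1)))
    (α : ℝ) (hα : α ∈ Set.Ioo (0 : ℝ) 1) (hqpos : 0 < quantileFun (distFun μ (Z 1)) α)
    -- time-consistent VaR defined by backward recursion
    (V : ℕ → (Ω → ℝ) → Ω → ℝ)
    (hVT : ∀ X : Ω → ℝ, V T X = X)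
    (hVrec : ∀ t, t < T → ∀ X : Ω → ℝ, V t X = condVaR (ℱ t) μ α (V (t + 1) X)) :
    ∀ t, t < T → ∀ᵐ ω ∂μ,
      V t (L T) ω = quantileFun (distFun μ (Z 1)) α *
        Real.sqrt (a₀ * ∑ k ∈ Finset.range (T - t - 1),
            (a₁ * quantileFun (distFun μ (fun ω' => Z 1 ω' ^ 2)) α + b) ^ k
          + σ (t + 1) ω ^ 2 *
            (a₁ * quantileFun (distFun μ (fun ω' => Z 1 ω' ^ 2)) α + b) ^ (T - t - 1)) := by
  have hZ1 : Measurable (Z 1) := hZmeas 1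
  set F : ℝ → ℝ := distFun μ (Z 1) with hFdef
  set F2 : ℝ → ℝ := distFun μ (fun ω' => Z 1 ω' ^ 2) with hF2def
  set q : ℝ := quantileFun F α with hqdef
  set q₂ : ℝ := quantileFun F2 α with hq2def
  set c : ℝ := a₁ * q₂ + b with hcdef
  have hq0 : 0 < q := hqpos
  -- quantile characterization for F at level α
  obtain ⟨y, hy⟩ := exists_distFun_eq hZ1 hcont hα
  have hyiff : ∀ x, α ≤ F x ↔ y ≤ x := fun x => by
    rw [← hy]; exact ⟨fun h => hmono.le_iff_le.mp h, fun h => hmono.le_iff_le.mpr h⟩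
  have hqy : q = y := quantile_spec hyiff
  have hqiff : ∀ x, α ≤ F x ↔ q ≤ x := fun x => by rw [hqy]; exact hyiff x
  have hyF : F y = α := hy
  have hFq : F q = α := by rw [hqy]; exact hyF
  -- quantile characterization for F at level (1+α)/2
  have hβmem : (1 + α) / 2 ∈ Set.Ioo (0:ℝ) 1 := by
    constructor <;> [linarith [hα.1]; linarith [hα.2]]
  obtain ⟨y', hy'⟩ := exists_distFun_eq hZ1 hcont hβmem
  have hy'iff : ∀ x, (1 + α) / 2 ≤ F x ↔ y' ≤ x := fun x => by
    rw [← hy']; exact ⟨fun h => hmono.le_iff_le.mp h, fun h => hmono.le_iff_le.mpr h⟩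
  have hy'F : F y' = (1 + α) / 2 := hy'
  have hqy' : q < y' := by
    refine hmono.lt_iff_lt.mp ?_
    rw [hFq, hy'F]
    linarith [hα.2]
  have hy'pos : 0 < y' := lt_trans hq0 hqy'
  -- characterization of F2 quantile
  have hq2iff0 : ∀ x, α ≤ F2 x ↔ y' ^ 2 ≤ x := by
    intro x
    rcases lt_or_ge x 0 with hx | hx
    · rw [hF2def, distFun_sq_neg hx]
      constructor
      · intro h; linarith [hα.1]
      · intro h; nlinarith
    · rw [hF2def, distFun_sq_eq hZ1 hsym hx]
      have h1 : α ≤ 2 * F (Real.sqrt x) - 1 ↔ (1 + α) / 2 ≤ F (Real.sqrt x) := by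
        constructor <;> intro h <;> linarith
      rw [h1, hy'iff]
      rw [Real.le_sqrt hy'pos.le hx]
  have hq2y : q₂ = y' ^ 2 := quantile_spec hq2iff0
  have hq2iff : ∀ x, α ≤ F2 x ↔ q₂ ≤ x := fun x => by rw [hq2y]; exact hq2iff0 x
  have hq2pos : 0 < q₂ := by rw [hq2y]; positivity
  have hc0 : 0 < c := by rw [hcdef]; positivity
  -- the backward induction
  have key : ∀ n : ℕ, ∀ t : ℕ, t < T → T - t - 1 = n →
      ∀ᵐ ω ∂μ, V t (L T) ω
        = q * Real.sqrt (a₀ * ∑ k ∈ Finset.range n, c ^ k + σ (t + 1) ω ^ 2 * c ^ n) := by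
    intro n
    induction n with
    | zero =>
      intro t ht hn
      have hTt : T = t + 1 := by omega
      have hVt : V t (L T) = condVaR (ℱ t) μ α (L T) := by
        rw [hVrec t ht, show t + 1 = T from hTt.symm, hVT]
      have hf : L T =ᵐ[μ] fun ω => (σ (t+1) ω) * (Z (t+1) ω) := by
        refine ae_of_all _ fun ω => ?_
        rw [show t + 1 = T from hTt.symm]
        exact hL T (by omega) le_rfl ω
      have hG : ∀ m : ℝ, MeasurableSet {p : ℝ × ℝ | p.1 * p.2 ≤ m} := fun m =>
        measurableSet_le (measurable_fst.mul measurable_snd) measurable_const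
      have hiff : ∀ w, 0 < w → ∀ m : ℝ,
          (α ≤ (μ.map (Z (t+1)) {x | w * x ≤ m}).toReal ↔
            q * Real.sqrt (a₀ * ∑ k ∈ Finset.range 0, c ^ k + w ^ 2 * c ^ 0) ≤ m) := by
        intro w hw m
        have hrw : q * Real.sqrt (a₀ * ∑ k ∈ Finset.range 0, c ^ k + w ^ 2 * c ^ 0) = q * w := by
          simp [Real.sqrt_sq hw.le]
        rw [hrw]
        have hident' : μ.map (Z (t+1)) = μ.map (Z 1) := hident (t+1) (by omega) (by omega)
        have hsetx : {x : ℝ | w * x ≤ m} = Set.Iic (m / w) := by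
          ext x
          rw [Set.mem_setOf_eq, Set.mem_Iic, le_div_iff₀ hw, mul_comm]
        rw [hident', hsetx, ← distFun_map_eq hZ1, ← hFdef, hqiff, le_div_iff₀ hw, mul_comm]
      have hcomp := condVaR_comp (ℱ t) (hℱ t) (hZmeas (t+1)) (hσmeas t) (hσpos (t+1))
        (hindep t) hG hf hiff
      rw [hVt]
      exact hcomp
    | succ n ih =>
      intro t ht hn
      have ht1 : t + 1 < T := by omega
      have ihh := ih (t+1) ht1 (by omega)
      set A : ℝ := a₀ * ∑ k ∈ Finset.range n, c ^ k with hAdef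
      have hA0 : 0 ≤ A := by rw [hAdef]; positivity
      have hf : V (t+1) (L T) =ᵐ[μ] fun ω => q * Real.sqrt
          (A + (a₀ + a₁ * (σ (t+1) ω * Z (t+1) ω) ^ 2 + b * σ (t+1) ω ^ 2) * c ^ n) := by
        filter_upwards [ihh] with ω hω
        rw [hω]
        have h2 := hσrec (t+2) (by omega) (by omega) ω
        rw [show t + 2 - 1 = t + 1 from rfl] at h2
        have h1 := hL (t+1) (by omega) (by omega) ω
        have hσeq : σ (t + 1 + 1) ω ^ 2
            = a₀ + a₁ * (σ (t+1) ω * Z (t+1) ω) ^ 2 + b * σ (t+1) ω ^ 2 := by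
          rw [show t + 1 + 1 = t + 2 from rfl, h2, h1]
        rw [hσeq]
      have hG : ∀ m : ℝ, MeasurableSet {p : ℝ × ℝ | q * Real.sqrt
          (A + (a₀ + a₁ * (p.1 * p.2) ^ 2 + b * p.1 ^ 2) * c ^ n) ≤ m} := by
        intro m
        have hgc : Continuous fun p : ℝ × ℝ => q * Real.sqrt
            (A + (a₀ + a₁ * (p.1 * p.2) ^ 2 + b * p.1 ^ 2) * c ^ n) := by fun_prop
        exact measurableSet_le hgc.measurable measurable_const
      have hiff : ∀ w, 0 < w → ∀ m : ℝ,
          (α ≤ (μ.map (Z (t+1)) {x | q * Real.sqrt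
              (A + (a₀ + a₁ * (w * x) ^ 2 + b * w ^ 2) * c ^ n) ≤ m}).toReal ↔
            q * Real.sqrt (a₀ * ∑ k ∈ Finset.range (n+1), c ^ k + w ^ 2 * c ^ (n+1)) ≤ m) := by
        intro w hw m
        have hident' : μ.map (Z (t+1)) = μ.map (Z 1) := hident (t+1) (by omega) (by omega)
        set u : ℝ := A + (a₀ + b * w ^ 2) * c ^ n with hudef
        set v : ℝ := a₁ * w ^ 2 * c ^ n with hvdef
        have hu0 : 0 < u := by rw [hudef]; positivity
        have hv0 : 0 < v := by rw [hvdef]; positivity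
        have hGwx : ∀ x : ℝ, A + (a₀ + a₁ * (w * x) ^ 2 + b * w ^ 2) * c ^ n
            = u + v * x ^ 2 := by
          intro x
          rw [hudef, hvdef]
          ring
        have hrtarget : q * Real.sqrt (a₀ * ∑ k ∈ Finset.range (n+1), c ^ k + w ^ 2 * c ^ (n+1))
            = q * Real.sqrt (u + v * q₂) := by
          congr 2
          rw [Finset.sum_range_succ, hudef, hvdef, hAdef, hcdef]
          ring
        rw [hrtarget]
        have hrw0 : 0 < u + v * q₂ := by positivity
        rcases lt_or_ge m 0 with hm | hm
        · have hempty : {x : ℝ | q * Real.sqrt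
              (A + (a₀ + a₁ * (w * x) ^ 2 + b * w ^ 2) * c ^ n) ≤ m} = ∅ := by
            ext x
            simp only [Set.mem_setOf_eq, Set.mem_empty_iff_false, iff_false, not_le]
            calc m < 0 := hm
              _ < q * Real.sqrt (A + (a₀ + a₁ * (w * x) ^ 2 + b * w ^ 2) * c ^ n) := by
                  rw [hGwx x]; positivity
          rw [hempty]
          simp only [measure_empty, ENNReal.toReal_zero]
          constructor
          · intro h; linarith [hα.1]
          · intro h
            have : 0 < q * Real.sqrt (u + v * q₂) := by positivity
            linarith
        · set ψ : ℝ := ((m / q) ^ 2 - u) / v with hψdef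
          have hsetx : {x : ℝ | q * Real.sqrt
              (A + (a₀ + a₁ * (w * x) ^ 2 + b * w ^ 2) * c ^ n) ≤ m} = {x : ℝ | x ^ 2 ≤ ψ} := by
            ext x
            rw [Set.mem_setOf_eq, Set.mem_setOf_eq, hGwx x]
            have hmq : 0 ≤ m / q := by positivity
            constructor
            · intro h
              have h1 : Real.sqrt (u + v * x ^ 2) ≤ m / q := by
                rw [le_div_iff₀ hq0, mul_comm]; exact h
              have h2 : u + v * x ^ 2 ≤ (m / q) ^ 2 := (Real.sqrt_le_iff.mp h1).2
              rw [hψdef, le_div_iff₀ hv0]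
              linarith
            · intro h
              rw [hψdef, le_div_iff₀ hv0] at h
              have h2 : u + v * x ^ 2 ≤ (m / q) ^ 2 := by linarith
              have h3 : Real.sqrt (u + v * x ^ 2) ≤ m / q := by
                rw [show m / q = Real.sqrt ((m / q) ^ 2) from (Real.sqrt_sq hmq).symm]
                exact Real.sqrt_le_sqrt h2
              calc q * Real.sqrt (u + v * x ^ 2) ≤ q * (m / q) :=
                    mul_le_mul_of_nonneg_left h3 hq0.le
                _ = m := by field_simp
          have hψmeas : MeasurableSet {x : ℝ | x ^ 2 ≤ ψ} :=
            measurableSet_le (measurable_id.pow_const 2) measurable_const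
          have hmeq : (μ.map (Z (t+1)) {x : ℝ | q * Real.sqrt
              (A + (a₀ + a₁ * (w * x) ^ 2 + b * w ^ 2) * c ^ n) ≤ m}).toReal = F2 ψ := by
            rw [hsetx, hident', Measure.map_apply hZ1 hψmeas, hF2def, distFun]
            rfl
          rw [hmeq, hq2iff ψ]
          rw [hψdef, le_div_iff₀ hv0]
          constructor
          · intro h
            have h2 : u + v * q₂ ≤ (m / q) ^ 2 := by linarith
            have h3 : Real.sqrt (u + v * q₂) ≤ m / q := by
              rw [show m / q = Real.sqrt ((m / q) ^ 2) from (Real.sqrt_sq (by positivity)).symm]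
              exact Real.sqrt_le_sqrt h2
            calc q * Real.sqrt (u + v * q₂) ≤ q * (m / q) :=
                  mul_le_mul_of_nonneg_left h3 hq0.le
              _ = m := by field_simp
          · intro h
            have h1 : Real.sqrt (u + v * q₂) ≤ m / q := by
              rw [le_div_iff₀ hq0, mul_comm]; exact h
            have h2 : u + v * q₂ ≤ (m / q) ^ 2 := (Real.sqrt_le_iff.mp h1).2
            linarith
      have hcomp := condVaR_comp (ℱ t) (hℱ t) (hZmeas (t+1)) (hσmeas t) (hσpos (t+1))
        (hindep t) hG hf hiff
      rw [hVrec t ht]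
      exact hcomp
  intro t ht
  exact key (T - t - 1) t ht rfl
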